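/- For f(ρ) = ρ^σ ln ρ with σ > 0 (and the convention G(0)=0), the map G(z) = |z|^{2σ} ln(|z|²) · z on ℂ is locally Lipschitz: for every M₀ > 0, |G(z₁) − G(z₂)| ≤ C(σ)(1 + M₀^{2σ} + M₀^{2σ}|ln M₀|)|z₁ − z₂| whenever |z₁|, |z₂| ≤ M₀. -/

import Mathlib

private lemma lpn_sup {σ M : ℝ} (hσ : 0 < σ) (hM : 0 < M)
    {t : ℝ} (h0 : 0 ≤ t) (hle : t ≤ M) :
    t ^ (2*σ) * |Real.log (t^2)| ≤ 2 * (1/(2*σ) + M^(2*σ) * |Real.log M|) := by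
  have h2σ : (0:ℝ) < 2*σ := by linarith
  have hMσ : (0:ℝ) ≤ M ^ (2*σ) := Real.rpow_nonneg hM.le _
  have hlog2 : Real.log (t^2) = 2 * Real.log t := by
    rw [Real.log_pow]; norm_num
  rcases eq_or_lt_of_le h0 with h|h
  · rw [← h, Real.zero_rpow h2σ.ne', zero_mul]
    positivity
  · rw [hlog2, abs_mul, abs_two]
    have htσ : (0:ℝ) ≤ t ^ (2*σ) := Real.rpow_nonneg h0 _
    rcases le_total t 1 with ht1 | ht1
    · have hlt : |Real.log t| = Real.log t⁻¹ := by
        rw [Real.log_inv, abs_of_nonpos (Real.log_nonpos h0 ht1)]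
      have hb : Real.log t⁻¹ ≤ (t⁻¹) ^ (2*σ) / (2*σ) :=
        Real.log_le_rpow_div (by positivity) h2σ
      have key : t ^ (2*σ) * |Real.log t| ≤ 1/(2*σ) := by
        rw [hlt]
        calc t ^ (2*σ) * Real.log t⁻¹ ≤ t ^ (2*σ) * ((t⁻¹) ^ (2*σ) / (2*σ)) :=
              mul_le_mul_of_nonneg_left hb htσ
          _ = (t * t⁻¹) ^ (2*σ) / (2*σ) := by
              rw [Real.mul_rpow h0 (by positivity)]; ring
          _ = 1/(2*σ) := by rw [mul_inv_cancel₀ h.ne', Real.one_rpow]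
      nlinarith [abs_nonneg (Real.log t), mul_nonneg hMσ (abs_nonneg (Real.log M)), mul_nonneg htσ (abs_nonneg (Real.log t))]
    · have hltn : (0:ℝ) ≤ Real.log t := Real.log_nonneg ht1
      have key : t ^ (2*σ) * |Real.log t| ≤ M ^ (2*σ) * |Real.log M| := by
        rw [abs_of_nonneg hltn, abs_of_nonneg (Real.log_nonneg (le_trans ht1 hle))]
        exact mul_le_mul (Real.rpow_le_rpow h0 hle h2σ.le)
          (Real.log_le_log h hle) hltn hMσ
      nlinarith [abs_nonneg (Real.log t), one_div_pos.mpr h2σ]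


private lemma lpn_lip {σ M : ℝ} (hσ : 0 < σ) (hM : 0 < M)
    {s r : ℝ} (hs0 : 0 ≤ s) (hsr : s ≤ r) (hrM : r ≤ M) :
    |r ^ (2*σ) * Real.log (r^2) * r - s ^ (2*σ) * Real.log (s^2) * s| ≤
      ((2*σ+1) * (2 * (1/(2*σ) + M^(2*σ) * |Real.log M|)) + 2 * M^(2*σ)) * (r - s) := by
  have h2σ : (0:ℝ) < 2*σ := by linarith
  have hMσ : (0:ℝ) ≤ M ^ (2*σ) := Real.rpow_nonneg hM.le _
  have hr0 : 0 ≤ r := le_trans hs0 hsr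
  set A : ℝ := 2 * (1/(2*σ) + M^(2*σ) * |Real.log M|) with hA
  have hA0 : 0 ≤ A := by positivity
  have hsup : ∀ t : ℝ, 0 ≤ t → t ≤ M → t ^ (2*σ) * |Real.log (t^2)| ≤ A :=
    fun t h0 hle => lpn_sup hσ hM h0 hle
  rcases eq_or_lt_of_le hs0 with h|h
  · -- s = 0
    rw [← h]
    simp only [mul_zero, sub_zero]
    rw [abs_mul, abs_mul, abs_of_nonneg hr0,
      abs_of_nonneg (Real.rpow_nonneg hr0 _)]
    have h1 : r ^ (2*σ) * |Real.log (r^2)| * r ≤ A * r :=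
      mul_le_mul_of_nonneg_right (hsup r hr0 hrM) hr0
    nlinarith [mul_nonneg (mul_nonneg (Real.rpow_nonneg hr0 (2*σ)) (abs_nonneg (Real.log (r^2)))) hr0, mul_nonneg hA0 hr0, mul_nonneg (mul_nonneg hA0 h2σ.le) hr0, mul_nonneg hMσ hr0]
  · -- 0 < s : MVT on Icc s r
    set ψ : ℝ → ℝ := fun t => t ^ (2*σ) * Real.log (t^2) * t with hψ
    set ψ' : ℝ → ℝ := fun t => (2*σ+1) * (t ^ (2*σ) * Real.log (t^2)) + 2 * t ^ (2*σ) with hψ'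
    have hderiv : ∀ x ∈ Set.Icc s r, HasDerivWithinAt ψ (ψ' x) (Set.Icc s r) x := by
      intro x hx
      have hx0 : 0 < x := lt_of_lt_of_le h hx.1
      have h1 : HasDerivAt (fun t : ℝ => t ^ (2*σ)) (2*σ * x ^ (2*σ - 1)) x :=
        Real.hasDerivAt_rpow_const (Or.inl hx0.ne')
      have h2 : HasDerivAt (fun t : ℝ => t^2) (2*x) x := by
        simpa using hasDerivAt_pow 2 x
      have h3 : HasDerivAt (fun t : ℝ => Real.log (t^2)) ((x^2)⁻¹ * (2*x)) x :=
        (Real.hasDerivAt_log (by positivity)).comp x h2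
      have h4 := ((h1.mul h3).mul (hasDerivAt_id x))
      have heq : (2*σ * x ^ (2*σ - 1) * Real.log (x^2) + x ^ (2*σ) * ((x^2)⁻¹ * (2*x))) * x
          + x ^ (2*σ) * Real.log (x^2) * 1 = ψ' x := by
        have hpow : x ^ (2*σ - 1) = x ^ (2*σ) / x := by
          rw [Real.rpow_sub hx0, Real.rpow_one]
        rw [hpow, hψ']
        field_simp
        ring
      simp only [id_eq, Pi.mul_apply] at h4
      rw [heq] at h4
      exact h4.hasDerivWithinAt
    have hbound : ∀ x ∈ Set.Icc s r, ‖ψ' x‖ ≤ (2*σ+1) * A + 2 * M^(2*σ) := by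
      intro x hx
      have hx0 : 0 ≤ x := le_trans hs0 hx.1
      have hxM : x ≤ M := le_trans hx.2 hrM
      have hxσ : x ^ (2*σ) ≤ M ^ (2*σ) := Real.rpow_le_rpow hx0 hxM h2σ.le
      have h1 : |x ^ (2*σ) * Real.log (x^2)| ≤ A := by
        rw [abs_mul, abs_of_nonneg (Real.rpow_nonneg hx0 _)]
        exact hsup x hx0 hxM
      have ha : |(2*σ+1) * (x ^ (2*σ) * Real.log (x^2))| =
          (2*σ+1) * |x ^ (2*σ) * Real.log (x^2)| := by
        rw [abs_mul, abs_of_nonneg (by linarith : (0:ℝ) ≤ 2*σ+1)]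
      have hb : |2 * x ^ (2*σ)| = 2 * x ^ (2*σ) := abs_of_nonneg (by positivity)
      calc ‖ψ' x‖ ≤ |(2*σ+1) * (x ^ (2*σ) * Real.log (x^2))| + |2 * x ^ (2*σ)| := abs_add_le _ _
        _ = (2*σ+1) * |x ^ (2*σ) * Real.log (x^2)| + 2 * x ^ (2*σ) := by rw [ha, hb]
        _ ≤ (2*σ+1) * A + 2 * M^(2*σ) := by
            have := mul_le_mul_of_nonneg_left h1 (by linarith : (0:ℝ) ≤ 2*σ+1)
            linarith
    have key := Convex.norm_image_sub_le_of_norm_hasDerivWithin_le hderiv hbound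
      (convex_Icc s r) (Set.left_mem_Icc.mpr hsr) (Set.right_mem_Icc.mpr hsr)
    rw [Real.norm_eq_abs, Real.norm_eq_abs, abs_of_nonneg (by linarith : (0:ℝ) ≤ r - s)] at key
    exact key


/-- for `G(z) = |z|^{2σ} ln(|z|²) z` with `σ > 0` (and `G(0)=0`,
which holds automatically since `|0|^{2σ} = 0` and `ln 0 = 0` by convention),
for every `M₀ > 0`:
`|G(z₁) − G(z₂)| ≤ C(σ)(1 + M₀^{2σ} + M₀^{2σ}|ln M₀|)|z₁ − z₂|`
whenever `|z₁|, |z₂| ≤ M₀`. -/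
theorem log_power_nonlinearity_lipschitz (σ : ℝ) (hσ : 0 < σ) :
    ∃ C : ℝ, 0 < C ∧ ∀ M₀ : ℝ, 0 < M₀ → ∀ z₁ z₂ : ℂ,
      ‖z₁‖ ≤ M₀ → ‖z₂‖ ≤ M₀ →
      ‖(((‖z₁‖ ^ (2 * σ) * Real.log (‖z₁‖ ^ 2) : ℝ) : ℂ) * z₁ -
           ((‖z₂‖ ^ (2 * σ) * Real.log (‖z₂‖ ^ 2) : ℝ) : ℂ) * z₂)‖ ≤
        C * (1 + M₀ ^ (2 * σ) + M₀ ^ (2 * σ) * |Real.log M₀|) * ‖z₁ - z₂‖ := by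
  refine ⟨(2*σ+3)/σ + 2*(2*σ+3) + 2, by positivity, ?_⟩
  intro M₀ hM z₁ z₂ h₁ h₂
  have h2σ : (0:ℝ) < 2*σ := by linarith
  set r := ‖z₁‖ with hr
  set s := ‖z₂‖ with hs
  have hr0 : 0 ≤ r := norm_nonneg z₁
  have hs0 : 0 ≤ s := norm_nonneg z₂
  set d := ‖z₁ - z₂‖ with hd
  have hd0 : 0 ≤ d := norm_nonneg _
  set A : ℝ := 2 * (1/(2*σ) + M₀^(2*σ) * |Real.log M₀|) with hA
  set K : ℝ := (2*σ+1) * A + 2 * M₀^(2*σ) with hK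
  have hA0 : 0 ≤ A := by positivity
  have hMσ : (0:ℝ) ≤ M₀ ^ (2*σ) := Real.rpow_nonneg hM.le _
  have hK0 : 0 ≤ K := by positivity
  set fr : ℝ := r ^ (2*σ) * Real.log (r^2) with hfr
  set fs : ℝ := s ^ (2*σ) * Real.log (s^2) with hfs
  -- |r - s| ≤ d
  have hrs : |r - s| ≤ d := abs_norm_sub_norm_le z₁ z₂
  -- sup bounds
  have hfrb : |fr| ≤ A := by
    rw [hfr, abs_mul, abs_of_nonneg (Real.rpow_nonneg hr0 _)]
    exact lpn_sup hσ hM hr0 h₁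
  -- Lipschitz bound on ψ
  have hlip : |fr * r - fs * s| ≤ K * |r - s| := by
    rcases le_total s r with hle | hle
    · have := lpn_lip hσ hM hs0 hle h₁
      rwa [abs_of_nonneg (by linarith : (0:ℝ) ≤ r - s)]
    · have := lpn_lip hσ hM hr0 hle h₂
      rw [abs_sub_comm, abs_sub_comm r s]
      rwa [abs_of_nonneg (by linarith : (0:ℝ) ≤ s - r)]
  -- decomposition in ℂ
  have hdec : ((fr : ℝ) : ℂ) * z₁ - ((fs : ℝ) : ℂ) * z₂
      = ((fr : ℝ) : ℂ) * (z₁ - z₂) + (((fr - fs : ℝ)) : ℂ) * z₂ := by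
    push_cast; ring
  have step1 : ‖(fr : ℂ) * z₁ - (fs : ℂ) * z₂‖
      ≤ |fr| * d + |fr - fs| * s := by
    rw [hdec]
    refine le_trans (norm_add_le _ _) ?_
    rw [norm_mul, norm_mul, Complex.norm_real, Complex.norm_real, Real.norm_eq_abs, Real.norm_eq_abs]
  have step2 : |fr - fs| * s ≤ K * |r - s| + |fr| * |r - s| := by
    have h5 : |fr - fs| * s = |fr * s - fs * s| := by
      rw [← sub_mul, abs_mul, abs_of_nonneg hs0]
    have h6 : fr * s - fs * s = (fr * r - fs * s) + fr * (s - r) := by ring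
    rw [h5, h6]
    refine le_trans (abs_add_le _ _) ?_
    rw [abs_mul, abs_sub_comm s r]
    exact add_le_add hlip le_rfl
  have step3 : |fr - fs| * s ≤ (K + A) * d := by
    refine le_trans step2 ?_
    have h7 : K * |r - s| ≤ K * d := mul_le_mul_of_nonneg_left hrs hK0
    have h8 : |fr| * |r - s| ≤ A * d :=
      mul_le_mul hfrb hrs (abs_nonneg _) hA0
    linarith
  have total : ‖(fr : ℂ) * z₁ - (fs : ℂ) * z₂‖ ≤ (2*A + K) * d := by
    have h9 : |fr| * d ≤ A * d := mul_le_mul_of_nonneg_right hfrb hd0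
    calc ‖(fr : ℂ) * z₁ - (fs : ℂ) * z₂‖ ≤ |fr| * d + |fr - fs| * s := step1
      _ ≤ A * d + (K + A) * d := add_le_add h9 step3
      _ = (2*A + K) * d := by ring
  refine le_trans total ?_
  have hCb : 2*A + K ≤ ((2*σ+3)/σ + 2*(2*σ+3) + 2) *
      (1 + M₀ ^ (2*σ) + M₀ ^ (2*σ) * |Real.log M₀|) := by
    set X := M₀ ^ (2*σ) with hX
    set Y := M₀ ^ (2*σ) * |Real.log M₀| with hY
    have hX0 : 0 ≤ X := hMσ
    have hY0 : 0 ≤ Y := by positivity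
    have hq0 : (0:ℝ) ≤ 1/σ := by positivity
    have hdiv : (2*σ+3)/σ = (2*σ+3) * (1/σ) := by ring
    have hAeq : A = 1/σ + 2*Y := by
      rw [hA]; field_simp
    rw [hK, hAeq, hdiv]
    nlinarith [mul_nonneg hq0 hX0, mul_nonneg hq0 hY0, mul_nonneg hσ.le hX0,
      mul_nonneg hσ.le hY0]
  exact mul_le_mul_of_nonneg_right hCb hd0
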